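/- Let 0 ≤ R − d ≤ r ≤ R and let A, B be two points in the annulus {P : r ≤ |P| ≤ R} with dist(A,B) ≥ d. Then the angle ∠AOB at the origin O satisfies ∠AOB ≥ min( arccos((R² + r² − d²)/(2Rr)), 2·arcsin(d/(2R)) ). -/

import Mathlib

open Real

private lemma arccos_antitone {x y : ℝ} (h : x ≤ y) : Real.arccos y ≤ Real.arccos x := by
  rw [Real.arccos_eq_pi_div_two_sub_arcsin, Real.arccos_eq_pi_div_two_sub_arcsin]
  have := Real.monotone_arcsin h
  linarith

private lemma key_ineq (a b r R D : ℝ) (hr : 0 < r) (hrR : r ≤ R)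
    (h1 : r ≤ a) (h2 : a ≤ R) (h3 : r ≤ b) (h4 : b ≤ R) (hD : 0 ≤ D) :
    (a ^ 2 + b ^ 2 - D) * (R * r) ≤ (R ^ 2 + r ^ 2 - D) * (a * b) ∨
    (a ^ 2 + b ^ 2 - D) * (R * R) ≤ (2 * R ^ 2 - D) * (a * b) := by
  have ha : 0 < a := lt_of_lt_of_le hr h1
  have hb : 0 < b := lt_of_lt_of_le hr h3
  have hR : 0 < R := lt_of_lt_of_le hr hrR
  rcases le_or_gt (b ^ 2) (a * R + D) with hs1 | hs1
  · rcases le_or_gt (R ^ 2) (b * R + D) with hs2 | hs2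
    · -- f(a,b) ≤ f(R,b) ≤ f(R,R)
      right
      have e1 : (a ^ 2 + b ^ 2 - D) * (R * R) ≤ (R ^ 2 + b ^ 2 - D) * (a * R) := by
        nlinarith [mul_nonneg (mul_nonneg hR.le (sub_nonneg.2 h2))
          (show (0:ℝ) ≤ a * R + D - b ^ 2 by linarith)]
      have e2 : (R ^ 2 + b ^ 2 - D) * (a * R) ≤ (2 * R ^ 2 - D) * (a * b) := by
        nlinarith [mul_nonneg (mul_nonneg ha.le (sub_nonneg.2 h4))
          (show (0:ℝ) ≤ b * R - R ^ 2 + D by linarith)]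
      linarith
    · -- f(a,b) ≤ f(R,b) ≤ f(R,r) = f(r,R)
      left
      have e1 : (a ^ 2 + b ^ 2 - D) * (R * r) ≤ (R ^ 2 + b ^ 2 - D) * (a * r) := by
        nlinarith [mul_nonneg (mul_nonneg hr.le (sub_nonneg.2 h2))
          (show (0:ℝ) ≤ a * R + D - b ^ 2 by linarith)]
      have e2 : (R ^ 2 + b ^ 2 - D) * (a * r) ≤ (R ^ 2 + r ^ 2 - D) * (a * b) := by
        have : b * r ≤ b * R := by nlinarith
        nlinarith [mul_nonneg (mul_nonneg ha.le (sub_nonneg.2 h3))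
          (show (0:ℝ) ≤ R ^ 2 - b * r - D by nlinarith)]
      linarith
  · -- f(a,b) ≤ f(r,b)
    have hs3 : r ^ 2 ≤ b * R + D := by nlinarith
    left
    have e1 : (a ^ 2 + b ^ 2 - D) * (r * R) ≤ (r ^ 2 + b ^ 2 - D) * (a * R) := by
      nlinarith [mul_nonneg (mul_nonneg hR.le (sub_nonneg.2 h1))
        (show (0:ℝ) ≤ b ^ 2 - D - a * r by nlinarith)]
    have e2 : (r ^ 2 + b ^ 2 - D) * (a * R) ≤ (R ^ 2 + r ^ 2 - D) * (a * b) := by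
      nlinarith [mul_nonneg (mul_nonneg ha.le (sub_nonneg.2 h4))
        (show (0:ℝ) ≤ b * R + D - r ^ 2 by linarith)]
    linarith

/-- Bateman–Erdős/Soss annulus angle lemma. -/
theorem stmt_2 (r R d : ℝ) (A B : EuclideanSpace ℝ (Fin 2))
    (hr : 0 < r) (hrR : r ≤ R) (hRd : 0 ≤ R - d) (hdr : R - d ≤ r) (hd2R : d ≤ 2 * R)
    (hA : r ≤ ‖A‖) (hA' : ‖A‖ ≤ R) (hB : r ≤ ‖B‖) (hB' : ‖B‖ ≤ R)
    (hAB : d ≤ dist A B) :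
    min (Real.arccos ((R ^ 2 + r ^ 2 - d ^ 2) / (2 * R * r)))
        (2 * Real.arcsin (d / (2 * R))) ≤ InnerProductGeometry.angle A B := by
  have hR : 0 < R := lt_of_lt_of_le hr hrR
  have hθ0 : 0 ≤ InnerProductGeometry.angle A B := InnerProductGeometry.angle_nonneg A B
  have hθπ : InnerProductGeometry.angle A B ≤ π := InnerProductGeometry.angle_le_pi A B
  rcases le_or_gt d 0 with hd | hd
  · -- trivial: second term is ≤ 0
    have : Real.arcsin (d / (2 * R)) ≤ 0 :=
      Real.arcsin_nonpos.2 (div_nonpos_of_nonpos_of_nonneg hd (by linarith))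
    calc min _ (2 * Real.arcsin (d / (2 * R))) ≤ 2 * Real.arcsin (d / (2 * R)) :=
          min_le_right _ _
      _ ≤ 0 := by linarith
      _ ≤ _ := hθ0
  set a := ‖A‖ with ha_def
  set b := ‖B‖ with hb_def
  have ha : 0 < a := lt_of_lt_of_le hr hA
  have hb : 0 < b := lt_of_lt_of_le hr hB
  -- cos of the angle is bounded by (a²+b²-d²)/(2ab)
  have hd2 : d ^ 2 ≤ dist A B ^ 2 := by
    have := pow_le_pow_left₀ hd.le hAB 2
    exact this
  have hdist : dist A B ^ 2 = a ^ 2 - 2 * inner ℝ A B + b ^ 2 := by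
    rw [dist_eq_norm]
    exact norm_sub_sq_real A B
  have hinner : (inner ℝ A B : ℝ) ≤ (a ^ 2 + b ^ 2 - d ^ 2) / 2 := by
    rw [hdist] at hd2; linarith
  have hcos : Real.cos (InnerProductGeometry.angle A B) ≤
      (a ^ 2 + b ^ 2 - d ^ 2) / (2 * (a * b)) := by
    rw [InnerProductGeometry.cos_angle]
    rw [div_le_div_iff₀ (by positivity) (by positivity)]
    nlinarith [hinner, mul_pos ha hb]
  have hcosle : ∀ c : ℝ, Real.cos (InnerProductGeometry.angle A B) ≤ c →
      Real.arccos c ≤ InnerProductGeometry.angle A B := by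
    intro c hc
    have := arccos_antitone hc
    rwa [Real.arccos_cos hθ0 hθπ] at this
  rcases key_ineq a b r R (d ^ 2) hr hrR hA hA' hB hB' (by positivity) with h | h
  · -- left branch: use arccos term
    refine le_trans (min_le_left _ _) (hcosle _ (le_trans hcos ?_))
    rw [div_le_div_iff₀ (by positivity) (by positivity)]
    nlinarith [h]
  · -- right branch: use 2 arcsin term
    have hx1 : d / (2 * R) ≤ 1 := by rw [div_le_one (by positivity)]; linarith
    have hx0 : 0 ≤ d / (2 * R) := by positivity
    set t := Real.arcsin (d / (2 * R)) with ht_def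
    have ht0 : 0 ≤ t := Real.arcsin_nonneg.2 hx0
    have htπ : t ≤ π / 2 := Real.arcsin_le_pi_div_two _
    have hsin : Real.sin t = d / (2 * R) := Real.sin_arcsin (by linarith) hx1
    have hcos2t : Real.cos (2 * t) = (2 * R ^ 2 - d ^ 2) / (2 * R ^ 2) := by
      rw [Real.cos_two_mul, Real.cos_sq', hsin]
      field_simp
      ring
    refine le_trans (min_le_right _ _) ?_
    have harc : Real.arccos (Real.cos (2 * t)) = 2 * t :=
      Real.arccos_cos (by linarith) (by linarith)
    rw [← harc]
    apply hcosle
    rw [hcos2t]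
    refine le_trans hcos ?_
    rw [div_le_div_iff₀ (by positivity) (by positivity)]
    nlinarith [h]
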